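/- Let γ > 1 and let f^num be a continuous, consistent numerical two-point flux for the compressible Euler equations that is EC and PEP and whose density component f^num_ρ(u₋, u₊) does not depend on the pressures p₋, p₊. Then for every pair of states u₋ = (ρ₋, v, p₋), u₊ = (ρ₊, v, p₊) with common velocity v, with ρ₋ ≠ ρ₊ and ρ₋/p₋ ≠ ρ₊/p₊, one has f^num_ρ = ρ^log v and f^num_{ρe} = v f^num_{ρv} − (1/2) ρ^log v³ + (1/(γ−1)) ( ρ^log / (ρ/p)^log ) v, where (ρ/p)^log = ⟦ρ/p⟧/⟦log(ρ/p)⟧. -/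

import Mathlib

noncomputable section
open Real

/-- A state `u = (ρ, v, p)` of the 1D compressible Euler equations:
density `u.1`, velocity `u.2.1`, pressure `u.2.2`. -/
abbrev EulerState := ℝ × ℝ × ℝ

/-- Entropy variables `w(u)` for the entropy `U = -ρ s/(γ-1)`, `s = log(p/ρ^γ)`. -/
def entVar (γ : ℝ) (u : EulerState) : EulerState :=
  (γ/(γ-1) - Real.log (u.2.2 / u.1 ^ γ)/(γ-1) - u.1 * u.2.1^2/(2*u.2.2),
   u.1*u.2.1/u.2.2,
   -(u.1/u.2.2))

/-- Euclidean dot product on `ℝ × ℝ × ℝ`. -/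
def dot3 (a b : EulerState) : ℝ := a.1*b.1 + a.2.1*b.2.1 + a.2.2*b.2.2

/-- Logarithmic mean `(a₊ - a₋)/(log a₊ - log a₋)`. -/
def logMean (am ap : ℝ) : ℝ := (ap - am)/(Real.log ap - Real.log am)

/-- Entropy conservation (EC) in the sense of Tadmor: `⟦w⟧ ⬝ f^num = ⟦ψ⟧`, `ψ = ρ v`. -/
def IsEC (γ : ℝ) (f : EulerState → EulerState → EulerState) : Prop :=
  ∀ um up : EulerState, 0 < um.1 → 0 < um.2.2 → 0 < up.1 → 0 < up.2.2 →
    dot3 (entVar γ up - entVar γ um) (f um up) = up.1 * up.2.1 - um.1 * um.2.1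

/-- Pressure equilibrium preservation (PEP). -/
def IsPEP (f : EulerState → EulerState → EulerState) : Prop :=
  ∃ c₁ c₂ : ℝ → ℝ → ℝ, ∀ ρm ρp v p : ℝ, 0 < ρm → 0 < ρp → 0 < p →
    (f (ρm, v, p) (ρp, v, p)).2.1 = v * (f (ρm, v, p) (ρp, v, p)).1 + c₁ p v ∧
    (f (ρm, v, p) (ρp, v, p)).2.2 = (v^2/2) * (f (ρm, v, p) (ρp, v, p)).1 + c₂ p v

/-- Consistency: `f^num(u, u) = f(u)`, the Euler flux. -/
def IsConsistent (γ : ℝ) (f : EulerState → EulerState → EulerState) : Prop :=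
  ∀ ρ v p : ℝ, 0 < ρ → 0 < p →
    f (ρ, v, p) (ρ, v, p) = (ρ*v, ρ*v^2 + p, (p/(γ-1) + ρ*v^2/2 + p)*v)

/-- any continuous, consistent, EC and PEP two-point flux whose
density component does not depend on the pressures satisfies, for all pairs of
states with common velocity `v`, `ρ₋ ≠ ρ₊` and `ρ₋/p₋ ≠ ρ₊/p₊`,
`f^num_ρ = ρ^log v` and
`f^num_{ρe} = v f^num_{ρv} - (1/2) ρ^log v³ + (1/(γ-1)) (ρ^log/(ρ/p)^log) v`. -/
theorem ec_pep_flux_constant_velocity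
    (γ : ℝ) (hγ : 1 < γ) (f : EulerState → EulerState → EulerState)
    (hcont : ContinuousOn (fun q : EulerState × EulerState => f q.1 q.2)
      {q : EulerState × EulerState | 0 < q.1.1 ∧ 0 < q.1.2.2 ∧ 0 < q.2.1 ∧ 0 < q.2.2.2})
    (hcons : IsConsistent γ f)
    (hEC : IsEC γ f) (hPEP : IsPEP f)
    (hdens : ∀ ρm ρp vm vp pm pp qm qp : ℝ,
      0 < ρm → 0 < ρp → 0 < pm → 0 < pp → 0 < qm → 0 < qp →
      (f (ρm, vm, pm) (ρp, vp, pp)).1 = (f (ρm, vm, qm) (ρp, vp, qp)).1) :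
    ∀ ρm ρp v pm pp : ℝ, 0 < ρm → 0 < ρp → 0 < pm → 0 < pp →
      ρm ≠ ρp → ρm/pm ≠ ρp/pp →
      (f (ρm, v, pm) (ρp, v, pp)).1 = logMean ρm ρp * v ∧
      (f (ρm, v, pm) (ρp, v, pp)).2.2
        = v * (f (ρm, v, pm) (ρp, v, pp)).2.1
          - (1/2) * logMean ρm ρp * v^3
          + (1/(γ-1)) * (logMean ρm ρp / logMean (ρm/pm) (ρp/pp)) * v := by
  intro ρm ρp v pm pp hρm hρp hpm hpp hρne hratne
  have hγ' : γ - 1 ≠ 0 := sub_ne_zero.mpr (ne_of_gt hγ)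
  have hlog : ∀ p ρ : ℝ, 0 < ρ → 0 < p → Real.log (p / ρ ^ γ) = Real.log p - γ * Real.log ρ := by
    intro p ρ hρ hp
    rw [Real.log_div (ne_of_gt hp) (ne_of_gt (Real.rpow_pos_of_pos hρ γ)), Real.log_rpow hρ]
  have hL : Real.log ρp - Real.log ρm ≠ 0 := by
    refine sub_ne_zero.mpr fun h => hρne ?_
    rw [← Real.exp_log hρm, ← Real.exp_log hρp, h]
  have hM : Real.log (ρp/pp) - Real.log (ρm/pm) ≠ 0 := by
    refine sub_ne_zero.mpr fun h => hratne ?_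
    rw [← Real.exp_log (div_pos hρm hpm), ← Real.exp_log (div_pos hρp hpp), h]
  have hD : ρp/pp - ρm/pm ≠ 0 := sub_ne_zero.mpr (Ne.symm hratne)
  -- part 1
  have h1 := hEC (ρm, v, ρm) (ρp, v, ρp) hρm hρm hρp hρp
  simp only [entVar, dot3, Prod.fst_sub, Prod.snd_sub, hlog _ _ hρm hρm, hlog _ _ hρp hρp] at h1
  field_simp at h1
  have hnz1 : (4:ℝ)*ρm*ρp*(γ-1)^2 ≠ 0 := by positivity
  have part1' : (f (ρm,v,ρm) (ρp,v,ρp)).1 * (Real.log ρp - Real.log ρm) = (ρp - ρm) * v :=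
    mul_left_cancel₀ hnz1 (by linear_combination (2*ρm*ρp*(γ-1)) * h1)
  have Feq : (f (ρm,v,pm) (ρp,v,pp)).1 = (f (ρm,v,ρm) (ρp,v,ρp)).1 :=
    hdens ρm ρp v v pm pp ρm ρp hρm hρp hpm hpp hρm hρp
  have K1 : (f (ρm,v,pm) (ρp,v,pp)).1 * (Real.log ρp - Real.log ρm) = (ρp - ρm) * v := by
    rw [Feq]; exact part1'
  have part1 : (f (ρm,v,pm) (ρp,v,pp)).1 = logMean ρm ρp * v := by
    rw [logMean, div_mul_eq_mul_div, eq_div_iff hL]; exact K1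
  refine ⟨part1, ?_⟩
  -- part 2
  have h2 := hEC (ρm, v, pm) (ρp, v, pp) hρm hpm hρp hpp
  simp only [entVar, dot3, Prod.fst_sub, Prod.snd_sub, hlog _ _ hρm hpm, hlog _ _ hρp hpp] at h2
  field_simp at h2
  simp only [logMean]; rw [Real.log_div (ne_of_gt hρm) (ne_of_gt hpm),
    Real.log_div (ne_of_gt hρp) (ne_of_gt hpp)]
  rw [Real.log_div (ne_of_gt hρm) (ne_of_gt hpm), Real.log_div (ne_of_gt hρp) (ne_of_gt hpp)] at hM
  have hD' : ρp*pm - pp*ρm ≠ 0 := by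
    intro h; apply hD
    field_simp
    linarith
  have hnz2 : (4:ℝ)*(γ-1)*pm^2*pp^2 ≠ 0 := by positivity
  have h2' : (-(pm*pp*(Real.log pp - Real.log pm - γ*(Real.log ρp - Real.log ρm)))
        - (γ-1)*v^2/2*(ρp*pm - ρm*pp)) * (f (ρm,v,pm) (ρp,v,pp)).1
      + (γ-1)*v*(ρp*pm - ρm*pp) * (f (ρm,v,pm) (ρp,v,pp)).2.1
      - (γ-1)*(ρp*pm - ρm*pp) * (f (ρm,v,pm) (ρp,v,pp)).2.2
      = (γ-1)*pm*pp*v*(ρp-ρm) :=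
    mul_left_cancel₀ hnz2 (by linear_combination (2*(γ-1)*pm^2*pp^2) * h2)
  have hD2 : ρp*pm - ρm*pp ≠ 0 := by intro h; apply hD'; linarith
  field_simp
  linear_combination (-2*(Real.log ρp - Real.log ρm)) * h2'
    + (-2*pm*pp*(Real.log pp - Real.log pm - γ*(Real.log ρp - Real.log ρm))
       - (γ-1)*v^2*(ρp*pm - ρm*pp)) * K1
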